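/- arXiv:0803.0788 — 2 statements merged into one kernel-verified Lean document; each statement's English description precedes it below -/
import Mathlib

section
/- (Carleson Embedding Theorem, discrete form) There is an absolute constant C > 0 such that for every finitely supported real sequence b = {b_I : I ∈ 𝒟} and every f ∈ L²(ℝ), Σ_{I∈𝒟} b_I² ⟨f, h¹_I⟩² ≤ C · ‖{b_I}‖_Carl² · ‖f‖_2². -/
open MeasureTheory ProbabilityTheory Real Filter
open scoped ENNReal

attribute [local instance] Classical.propDecidable

noncomputable section

namespace RandomParaproducts

/-- Dyadic intervals: `(n, k)` represents `[k·2ⁿ, (k+1)·2ⁿ)`. -/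
abbrev D : Type := ℤ × ℤ

/-- The length `2ⁿ` of the dyadic interval `(n, k)`. -/
def len (I : D) : ℝ := (2 : ℝ) ^ I.1

/-- The dyadic interval `[k·2ⁿ, (k+1)·2ⁿ)` as a subset of `ℝ`. -/
def ival (I : D) : Set ℝ := Set.Ico ((I.2 : ℝ) * (2 : ℝ) ^ I.1) (((I.2 : ℝ) + 1) * (2 : ℝ) ^ I.1)

/-- The left half of a dyadic interval. -/
def lc (I : D) : D := (I.1 - 1, 2 * I.2)

/-- The right half of a dyadic interval. -/
def rc (I : D) : D := (I.1 - 1, 2 * I.2 + 1)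

/-- The `L²`-normalized Haar function `h_I = h⁰_I`. -/
def haar (I : D) : ℝ → ℝ := fun x =>
  (Real.sqrt (len I))⁻¹ *
    ((ival (rc I)).indicator (fun _ => (1 : ℝ)) x - (ival (lc I)).indicator (fun _ => (1 : ℝ)) x)

/-- The function `h¹_I = |h_I| = |I|^{-1/2} 1_I`. -/
def haar1 (I : D) : ℝ → ℝ := fun x =>
  (Real.sqrt (len I))⁻¹ * (ival I).indicator (fun _ => (1 : ℝ)) x

/-- `h^ε_I`, where `false` codes the exponent `0` and `true` codes the exponent `1`. -/
def hfun : Bool → D → ℝ → ℝ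
  | false => haar
  | true => haar1

/-- The inner product `⟨f, g⟩ = ∫ f g` on `L²(ℝ)`. -/
def ip (f g : ℝ → ℝ) : ℝ := ∫ x, f x * g x

/-- The paraproduct `P^{ε,δ}_b f = ∑_I b_I ⟨f, h^δ_I⟩ h^ε_I` with finitely supported
numerical symbol `b`. -/
def P (e d : Bool) (b : D →₀ ℝ) (f : ℝ → ℝ) : ℝ → ℝ := fun x =>
  ∑ I ∈ b.support, b I * ip f (hfun d I) * hfun e I x

/-- The signed paraproduct `P^{σ,ε,δ}_b f = ∑_I σ_I b_I ⟨f, h^δ_I⟩ h^ε_I`. -/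
def Psig (σ : D → ℝ) (e d : Bool) (b : D →₀ ℝ) (f : ℝ → ℝ) : ℝ → ℝ := fun x =>
  ∑ I ∈ b.support, σ I * (b I * ip f (hfun d I) * hfun e I x)

/-- The square of the `L²(ℝ)` norm, `‖g‖₂² = ∫ g²`. -/
def l2normSq (g : ℝ → ℝ) : ℝ := ∫ x, (g x) ^ 2

/-- The Carleson norm of a sequence `a` whose nonzero entries lie in the finite set `s`:
`sup_J (|J|⁻¹ ∑_{I ⊆ J} a_I² |I|)^{1/2}`. -/
def carlOn (s : Finset D) (a : D → ℝ) : ℝ :=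
  ⨆ J : D, Real.sqrt ((len J)⁻¹ *
    ∑ I ∈ s.filter (fun I => ival I ⊆ ival J), (a I) ^ 2 * len I)

/-- `μ` is the law of independent uniformly distributed random signs `{σ_I : I ∈ 𝒟}`. -/
def IsSignMeasure (μ : Measure (D → ℝ)) : Prop :=
  IsProbabilityMeasure μ ∧
    iIndepFun (m := fun _ : D => (inferInstance : MeasurableSpace ℝ)) (fun I σ => σ I) μ ∧
    ∀ I : D, μ.map (fun σ => σ I) =
      (2⁻¹ : ℝ≥0∞) • (Measure.dirac (1 : ℝ) + Measure.dirac (-1 : ℝ))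

/-- `f` is a unit vector of `L²(ℝ)`. -/
def UnitL2 (f : ℝ → ℝ) : Prop := MemLp f 2 volume ∧ eLpNorm f 2 volume = 1

/-- The operator norm on `L²(ℝ)` of a map defined on functions. -/
def opNorm (T : (ℝ → ℝ) → ℝ → ℝ) : ℝ :=
  ⨆ f : {f : ℝ → ℝ // UnitL2 f}, Real.sqrt (l2normSq (T f.1))

/-- The averaged operator norm `sup_{‖f‖₂ = 1} (𝔼 ‖T_σ f‖₂²)^{1/2}`. -/
def avgOpNorm (μ : Measure (D → ℝ)) (T : (D → ℝ) → (ℝ → ℝ) → ℝ → ℝ) : ℝ :=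
  ⨆ f : {f : ℝ → ℝ // UnitL2 f}, Real.sqrt (∫ σ, l2normSq (T σ f.1) ∂μ)

/-- `b` is the finite linear combination of Haar functions with coefficients `c`. -/
def FinHaar (b : ℝ → ℝ) (c : D →₀ ℝ) : Prop :=
  b = fun x => ∑ I ∈ c.support, c I * haar I x

/-- The paraproduct `P^{ε,γ}_{b,α} f = ∑_{I} (⟨b, h^α_I⟩/|I|^{1/2}) ⟨f, h^γ_I⟩ h^ε_I` with
function symbol `b`, the sum extended over a finite set `s` containing all the
nonvanishing terms. -/
def Pb (s : Finset D) (e g a : Bool) (b : ℝ → ℝ) (f : ℝ → ℝ) : ℝ → ℝ := fun x =>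
  ∑ I ∈ s, (ip b (hfun a I) / Real.sqrt (len I)) * ip f (hfun g I) * hfun e I x

lemma measurableSet_ival (I : D) : MeasurableSet (ival I) := measurableSet_Ico

lemma volume_ival_ne_top (I : D) : volume (ival I) ≠ ⊤ := by
  simp only [ival, Real.volume_Ico]; exact ENNReal.ofReal_ne_top

lemma memℒp_haar (I : D) : MemLp (haar I) 2 volume := by
  have h1 : MemLp ((ival (rc I)).indicator (fun _ => (1 : ℝ))) 2 volume :=
    memLp_indicator_const 2 (measurableSet_ival _) 1 (Or.inr (volume_ival_ne_top _))
  have h2 : MemLp ((ival (lc I)).indicator (fun _ => (1 : ℝ))) 2 volume :=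
    memLp_indicator_const 2 (measurableSet_ival _) 1 (Or.inr (volume_ival_ne_top _))
  exact ((h1.sub h2).const_mul ((Real.sqrt (len I))⁻¹))

/-- The Haar function `h_I` as an element of `L²(ℝ)`. -/
def haarLp (I : D) : Lp ℝ 2 (volume : Measure ℝ) := (memℒp_haar I).toLp (haar I)

/-- The random Haar multiplier `T_σ f = ∑_{I ∈ 𝒟} σ_I ⟨f, h_I⟩ h_I`, as an element of
`L²(ℝ)`; the (infinite) sum converges unconditionally in `L²`. -/
def Tfull (σ : D → ℝ) (g : ℝ → ℝ) : Lp ℝ 2 (volume : Measure ℝ) :=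
  ∑' I : D, (σ I * ip g (haar I)) • haarLp I

/-- The composition `M_b T_σ M_β` applied to `f`, as a function. -/
def MbTM (σ : D → ℝ) (b β f : ℝ → ℝ) : ℝ → ℝ := fun x =>
  b x * (Tfull σ fun y => β y * f y) x

def pa (I : D) : D := (I.1 + 1, I.2 / 2)

lemma len_pos (I : D) : 0 < len I := zpow_pos (by norm_num) _

lemma two_zpow_pos (a : ℤ) : (0:ℝ) < (2:ℝ) ^ a := zpow_pos (by norm_num) _

lemma ival_nonempty (I : D) : (ival I).Nonempty := by
  refine Set.nonempty_Ico.2 ?_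
  have := two_zpow_pos I.1
  nlinarith

lemma volume_ival (I : D) : volume (ival I) = ENNReal.ofReal (len I) := by
  rw [ival, Real.volume_Ico]
  congr 1
  show ((I.2:ℝ) + 1) * (2:ℝ)^I.1 - (I.2:ℝ) * (2:ℝ)^I.1 = len I
  unfold len; ring

lemma scale_cast {a b : ℤ} (h : a ≤ b) :
    (2:ℝ) ^ b = ((2 ^ (b - a).toNat : ℤ) : ℝ) * (2:ℝ) ^ a := by
  set n := (b - a).toNat with hn
  rw [show b = (n:ℤ) + a by omega, zpow_add₀ (by norm_num : (2:ℝ) ≠ 0)]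
  push_cast
  rw [zpow_natCast]

lemma ival_subset_pa (I : D) : ival I ⊆ ival (pa I) := by
  have h1 : 2 * (I.2 / 2) ≤ I.2 := by omega
  have h2 : I.2 + 1 ≤ 2 * (I.2 / 2) + 2 := by omega
  have he := two_zpow_pos I.1
  have hE : (2:ℝ) ^ (I.1 + 1) = 2 * (2:ℝ) ^ I.1 := by
    rw [zpow_add₀ (by norm_num : (2:ℝ) ≠ 0)]; ring
  apply Set.Ico_subset_Ico
  · show ((I.2/2 : ℤ) : ℝ) * (2:ℝ)^(I.1+1) ≤ (I.2:ℝ) * (2:ℝ)^I.1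
    rw [hE]
    have h1' : ((2 * (I.2 / 2) : ℤ) : ℝ) ≤ (I.2 : ℝ) := by exact_mod_cast h1
    push_cast at h1' ⊢
    nlinarith
  · show ((I.2:ℝ) + 1) * (2:ℝ)^I.1 ≤ (((I.2/2 : ℤ) : ℝ) + 1) * (2:ℝ)^(I.1+1)
    rw [hE]
    have h2' : ((I.2 : ℝ) + 1) ≤ ((2 * (I.2 / 2) + 2 : ℤ) : ℝ) := by exact_mod_cast h2
    push_cast at h2' ⊢
    nlinarith

lemma pan_fst (n : ℕ) (I : D) : (pa^[n] I).1 = I.1 + n := by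
  induction n generalizing I with
  | zero => simp
  | succ m ih =>
    rw [Function.iterate_succ_apply, ih (pa I)]
    show I.1 + 1 + (m:ℤ) = I.1 + ((m:ℕ)+1 : ℕ)
    push_cast; ring

lemma ival_subset_pan (n : ℕ) (I : D) : ival I ⊆ ival (pa^[n] I) := by
  induction n generalizing I with
  | zero => simp
  | succ m ih =>
    rw [Function.iterate_succ_apply]
    exact (ival_subset_pa I).trans (ih (pa I))

lemma eq_of_same_scale {I J : D} (h : I.1 = J.1) (hx : (ival I ∩ ival J).Nonempty) : I = J := by
  obtain ⟨x, hxI, hxJ⟩ := hx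
  simp only [ival, Set.mem_Ico] at hxI hxJ
  rw [← h] at hxJ
  have he := two_zpow_pos I.1
  have h1 : (I.2 : ℝ) < (J.2 : ℝ) + 1 := by nlinarith [hxI.1, hxJ.2]
  have h2 : (J.2 : ℝ) < (I.2 : ℝ) + 1 := by nlinarith [hxJ.1, hxI.2]
  have h1' : I.2 < J.2 + 1 := by exact_mod_cast h1
  have h2' : J.2 < I.2 + 1 := by exact_mod_cast h2
  have h3 : I.2 = J.2 := by omega
  ext
  · exact h
  · exact h3

lemma subset_of_scale_le {I J : D} (h : I.1 ≤ J.1) (hx : (ival I ∩ ival J).Nonempty) :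
    ival I ⊆ ival J := by
  obtain ⟨x, hxI, hxJ⟩ := hx
  simp only [ival, Set.mem_Ico] at hxI hxJ
  set c : ℤ := 2 ^ (J.1 - I.1).toNat with hc
  have hcpos : (0:ℤ) < c := pow_pos (by norm_num) _
  have he := two_zpow_pos I.1
  have hE : (2:ℝ) ^ J.1 = (c : ℝ) * (2:ℝ) ^ I.1 := scale_cast h
  rw [hE] at hxJ
  -- real inequalities
  have rA : (J.2 : ℝ) * c < (I.2 : ℝ) + 1 := by nlinarith [hxJ.1, hxI.2]
  have rB : (I.2 : ℝ) < ((J.2 : ℝ) + 1) * c := by nlinarith [hxI.1, hxJ.2]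
  -- integer versions
  have iA : J.2 * c ≤ I.2 := by
    have : J.2 * c < I.2 + 1 := by exact_mod_cast rA
    omega
  have iB : I.2 + 1 ≤ (J.2 + 1) * c := by
    have : I.2 < (J.2 + 1) * c := by exact_mod_cast rB
    omega
  have iA' : ((J.2 * c : ℤ) : ℝ) ≤ (I.2 : ℝ) := by exact_mod_cast iA
  have iB' : ((I.2 : ℝ) + 1) ≤ (((J.2 + 1) * c : ℤ) : ℝ) := by exact_mod_cast iB
  apply Set.Ico_subset_Ico
  · rw [hE]; push_cast at iA' ⊢; nlinarith
  · rw [hE]; push_cast at iB' ⊢; nlinarith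

lemma len_le_of_subset {I J : D} (h : ival I ⊆ ival J) : len I ≤ len J := by
  have := measure_mono (μ := volume) h
  rw [volume_ival, volume_ival] at this
  exact (ENNReal.ofReal_le_ofReal_iff (len_pos J).le).1 this

lemma len_pan (n : ℕ) (I : D) : len (pa^[n] I) = 2 ^ n * len I := by
  unfold len
  rw [pan_fst, zpow_add₀ (by norm_num : (2:ℝ) ≠ 0), zpow_natCast]
  ring

def mass (f : ℝ → ℝ) (I : D) : ℝ := ∫ x in ival I, |f x|

lemma mass_nonneg (f : ℝ → ℝ) (I : D) : 0 ≤ mass f I :=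
  integral_nonneg fun x => abs_nonneg _

instance finite_ival (I : D) : IsFiniteMeasure (volume.restrict (ival I)) := by
  constructor
  rw [Measure.restrict_apply_univ, volume_ival]
  exact ENNReal.ofReal_lt_top

lemma integrableOn_ival {f : ℝ → ℝ} (hf : MemLp f 2 volume) (I : D) :
    IntegrableOn f (ival I) volume :=
  (hf.restrict (ival I)).integrable one_le_two

lemma toReal_volume_ival (I : D) : (volume (ival I)).toReal = len I := by
  rw [volume_ival, ENNReal.toReal_ofReal (len_pos I).le]

/-- L1 -/
lemma ip_haar1_sq_le {f : ℝ → ℝ} (hf : MemLp f 2 volume) (I : D) :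
    (ip f (haar1 I)) ^ 2 ≤ (len I)⁻¹ * (mass f I) ^ 2 := by
  have hlen := len_pos I
  have hs : (0:ℝ) < Real.sqrt (len I) := Real.sqrt_pos.2 hlen
  have heq : ip f (haar1 I) = (Real.sqrt (len I))⁻¹ * ∫ x in ival I, f x := by
    unfold ip haar1
    have : (fun x => f x * ((Real.sqrt (len I))⁻¹ * (ival I).indicator (fun _ => (1:ℝ)) x))
        = fun x => (Real.sqrt (len I))⁻¹ * (ival I).indicator f x := by
      funext x
      by_cases hx : x ∈ ival I
      · rw [Set.indicator_of_mem hx, Set.indicator_of_mem hx]; ring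
      · rw [Set.indicator_of_notMem hx, Set.indicator_of_notMem hx]; ring
    rw [this, integral_const_mul, integral_indicator (measurableSet_ival I)]
  rw [heq]
  have habs : |∫ x in ival I, f x| ≤ mass f I := by
    rw [mass]
    have := norm_integral_le_integral_norm (μ := volume.restrict (ival I)) f
    simpa [Real.norm_eq_abs] using this
  have h1 : (∫ x in ival I, f x) ^ 2 ≤ (mass f I) ^ 2 := by
    rw [← sq_abs]
    exact pow_le_pow_left₀ (abs_nonneg _) habs 2
  have h2 : ((Real.sqrt (len I))⁻¹) ^ 2 = (len I)⁻¹ := by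
    rw [inv_pow, Real.sq_sqrt hlen.le]
  calc ((Real.sqrt (len I))⁻¹ * ∫ x in ival I, f x) ^ 2
      = ((Real.sqrt (len I))⁻¹)^2 * (∫ x in ival I, f x)^2 := by ring
    _ ≤ ((Real.sqrt (len I))⁻¹)^2 * (mass f I)^2 := by
        apply mul_le_mul_of_nonneg_left h1 (by positivity)
    _ = (len I)⁻¹ * (mass f I)^2 := by rw [h2]

/-- Cauchy–Schwarz -/
lemma mass_sq_le {f : ℝ → ℝ} (hf : MemLp f 2 volume) (I : D) :
    (mass f I) ^ 2 ≤ len I * ∫ x, (f x) ^ 2 := by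
  have hlen := len_pos I
  set μ := volume.restrict (ival I)
  have hconj : Real.HolderConjugate 2 2 := Real.HolderConjugate.two_two
  have hmemf : MemLp (fun x => |f x|) (ENNReal.ofReal 2) μ := by
    have : MemLp f 2 μ := hf.restrict (ival I)
    have h2 : MemLp (fun x => ‖f x‖) 2 μ := this.norm
    simpa [Real.norm_eq_abs, show ENNReal.ofReal 2 = 2 by norm_num] using h2
  have hmem1 : MemLp (fun _ : ℝ => (1:ℝ)) (ENNReal.ofReal 2) μ := memLp_const 1
  have key := integral_mul_le_Lp_mul_Lq_of_nonneg hconj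
    (Filter.Eventually.of_forall fun x => abs_nonneg (f x))
    (Filter.Eventually.of_forall fun _ => zero_le_one) hmemf hmem1
  simp only [mul_one] at key
  have h1 : ∫ x, |f x| ^ (2:ℝ) ∂μ = ∫ x in ival I, (f x)^2 := by
    apply integral_congr_ae
    filter_upwards with x
    rw [show (2:ℝ) = ((2:ℕ):ℝ) by norm_num, Real.rpow_natCast, sq_abs]
  have h2 : ∫ _x, (1:ℝ) ^ (2:ℝ) ∂μ = len I := by
    simp only [Real.one_rpow, integral_const, smul_eq_mul, mul_one]
    show (volume.restrict (ival I) Set.univ).toReal = len I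
    rw [Measure.restrict_apply_univ, toReal_volume_ival]
  rw [h1, h2] at key
  have hA : (0:ℝ) ≤ ∫ x in ival I, (f x)^2 := integral_nonneg fun x => sq_nonneg _
  have hAE : ∫ x in ival I, (f x)^2 ≤ ∫ x, (f x)^2 := by
    apply setIntegral_le_integral
    · have := hf.integrable_sq
      simpa [sq] using this
    · exact Filter.Eventually.of_forall fun x => sq_nonneg _
  have hR : ((∫ x in ival I, (f x)^2) ^ (1/2:ℝ) * (len I) ^ (1/2:ℝ))^2
      = (∫ x in ival I, (f x)^2) * len I := by
    rw [mul_pow, ← Real.rpow_natCast (_ ^ (1/2:ℝ)) 2, ← Real.rpow_natCast ((len I) ^ (1/2:ℝ)) 2,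
      ← Real.rpow_mul hA, ← Real.rpow_mul hlen.le]
    norm_num
  calc (mass f I)^2 ≤ ((∫ x in ival I, (f x)^2) ^ (1/2:ℝ) * (len I) ^ (1/2:ℝ))^2 := by
        apply pow_le_pow_left₀ (mass_nonneg f I)
        exact key
    _ = (∫ x in ival I, (f x)^2) * len I := hR
    _ ≤ (∫ x, (f x)^2) * len I := by
        apply mul_le_mul_of_nonneg_right hAE hlen.le
    _ = len I * ∫ x, (f x)^2 := mul_comm _ _

lemma carl_nonneg (s : Finset D) (a : D → ℝ) : 0 ≤ carlOn s a :=
  Real.iSup_nonneg fun J => Real.sqrt_nonneg _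

/-- L3: the Carleson condition. -/
lemma carl_bound (s : Finset D) (a : D → ℝ) (J : D) :
    ∑ I ∈ s.filter (fun I => ival I ⊆ ival J), (a I) ^ 2 * len I
      ≤ (carlOn s a) ^ 2 * len J := by
  have hJ := len_pos J
  set F : D → ℝ := fun J => Real.sqrt ((len J)⁻¹ *
    ∑ I ∈ s.filter (fun I => ival I ⊆ ival J), (a I) ^ 2 * len I) with hF
  have hbdd : BddAbove (Set.range F) := by
    refine ⟨Real.sqrt (∑ I ∈ s, (a I)^2), ?_⟩
    rintro _ ⟨K, rfl⟩
    apply Real.sqrt_le_sqrt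
    rw [inv_mul_le_iff₀ (len_pos K)]
    calc ∑ I ∈ s.filter (fun I => ival I ⊆ ival K), (a I) ^ 2 * len I
        ≤ ∑ I ∈ s.filter (fun I => ival I ⊆ ival K), (a I) ^ 2 * len K := by
          apply Finset.sum_le_sum
          intro I hI
          exact mul_le_mul_of_nonneg_left (len_le_of_subset (Finset.mem_filter.1 hI).2)
            (sq_nonneg _)
      _ = (∑ I ∈ s.filter (fun I => ival I ⊆ ival K), (a I) ^ 2) * len K := by
          rw [Finset.sum_mul]
      _ ≤ len K * ∑ I ∈ s, (a I)^2 := by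
          rw [mul_comm (len K)]
          exact mul_le_mul_of_nonneg_right (Finset.sum_le_sum_of_subset_of_nonneg
            (Finset.filter_subset _ _) (fun i _ _ => sq_nonneg _)) (len_pos K).le
  have hle : F J ≤ carlOn s a := le_ciSup hbdd J
  have hx : (0:ℝ) ≤ (len J)⁻¹ * ∑ I ∈ s.filter (fun I => ival I ⊆ ival J), (a I) ^ 2 * len I := by
    apply mul_nonneg (by positivity)
    exact Finset.sum_nonneg fun I _ => mul_nonneg (sq_nonneg _) (len_pos I).le
  have h2 : (len J)⁻¹ * (∑ I ∈ s.filter (fun I => ival I ⊆ ival J), (a I) ^ 2 * len I)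
      ≤ (carlOn s a)^2 := by
    rw [← Real.sq_sqrt hx]
    exact pow_le_pow_left₀ (Real.sqrt_nonneg _) hle 2
  calc ∑ I ∈ s.filter (fun I => ival I ⊆ ival J), (a I) ^ 2 * len I
      = len J * ((len J)⁻¹ * ∑ I ∈ s.filter (fun I => ival I ⊆ ival J), (a I) ^ 2 * len I) := by
        field_simp
    _ ≤ len J * (carlOn s a)^2 := mul_le_mul_of_nonneg_left h2 hJ.le
    _ = (carlOn s a)^2 * len J := mul_comm _ _

/-- L5: the stopping interval carries mass of the large part of f. -/
lemma split_bound {f : ℝ → ℝ} (hm : Measurable f) (hf : MemLp f 2 volume) {l : ℝ}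
    (hl : 0 < l) {J : D} (hJ : l * len J ≤ mass f J) :
    l / 2 * len J ≤ ∫ x in ival J, Set.indicator {y | l < 2 * |f y|} (fun y => |f y|) x := by
  set s : Set ℝ := {y | l < 2 * |f y|} with hs
  have hsm : MeasurableSet s := measurableSet_lt measurable_const ((hm.abs).const_mul 2)
  have hintf : IntegrableOn (fun x => |f x|) (ival J) volume := (integrableOn_ival hf J).abs
  have hind1 : IntegrableOn (s.indicator fun y => |f y|) (ival J) volume :=
    hintf.indicator hsm
  have hind2 : IntegrableOn (sᶜ.indicator fun y => |f y|) (ival J) volume :=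
    hintf.indicator hsm.compl
  have hsplit : mass f J = (∫ x in ival J, s.indicator (fun y => |f y|) x)
      + ∫ x in ival J, sᶜ.indicator (fun y => |f y|) x := by
    rw [mass, ← integral_add hind1 hind2]
    apply integral_congr_ae
    filter_upwards with x
    rw [← Set.indicator_self_add_compl_apply s (fun y => |f y|) x]
  have hsmall : ∫ x in ival J, sᶜ.indicator (fun y => |f y|) x ≤ l / 2 * len J := by
    have : ∫ x in ival J, sᶜ.indicator (fun y => |f y|) x ≤ ∫ _x in ival J, l / 2 := by
      apply setIntegral_mono hind2 (integrableOn_const ?_)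
      · intro x
        by_cases hx : x ∈ sᶜ
        · rw [Set.indicator_of_mem hx]
          have : ¬ (l < 2 * |f x|) := hx
          linarith [not_lt.1 this]
        · rw [Set.indicator_of_notMem hx]; linarith
      · rw [volume_ival]
        exact ENNReal.ofReal_ne_top
    calc ∫ x in ival J, sᶜ.indicator (fun y => |f y|) x ≤ ∫ _x in ival J, l / 2 := this
      _ = l / 2 * len J := by
          rw [setIntegral_const, smul_eq_mul, measureReal_def, toReal_volume_ival, mul_comm]
  linarith [hsplit, hJ]

/-- Z: finite geometric sum bound. -/
lemma geom_le {K : Finset ℤ} {B : ℝ} (hB : 0 ≤ B) (h : ∀ c ∈ K, (2:ℝ) ^ c < B) :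
    ∑ c ∈ K, (2:ℝ) ^ c ≤ 2 * B := by
  rcases K.eq_empty_or_nonempty with rfl | hne
  · simp; linarith
  · set M := K.max' hne with hM
    have hMK := K.max'_mem hne
    have hle : ∀ c ∈ K, c ≤ M := fun c hc => K.le_max' c hc
    set φ : ℤ → ℕ := fun c => (M - c).toNat with hφ
    have hinj : ∀ c ∈ K, ∀ c' ∈ K, φ c = φ c' → c = c' := by
      intro c hc c' hc' hcc
      have := hle c hc; have := hle c' hc'
      simp only [hφ] at hcc; omega
    have heq : ∀ c ∈ K, (2:ℝ) ^ c = 2 ^ M * (1/2:ℝ) ^ (φ c) := by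
      intro c hc
      have hcM := hle c hc
      have ht : M = c + (φ c : ℤ) := by simp only [hφ]; omega
      have hpow : (2:ℝ) ^ M = 2 ^ c * 2 ^ (φ c) := by
        rw [ht, zpow_add₀ (by norm_num : (2:ℝ) ≠ 0), zpow_natCast]
      have h2t : (0:ℝ) < 2 ^ (φ c) := by positivity
      rw [hpow, div_pow, one_pow]
      field_simp
    rw [Finset.sum_congr rfl heq, ← Finset.mul_sum]
    have hsum : ∑ c ∈ K, (1/2:ℝ) ^ (φ c) ≤ 2 := by
      rw [← Finset.sum_image (f := fun t => (1/2:ℝ)^t) hinj]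
      set T := K.image φ with hT
      have hTne : T.Nonempty := hne.image φ
      have hTsub : T ⊆ Finset.range (T.max' hTne + 1) := by
        intro t ht
        rw [Finset.mem_range]
        exact Nat.lt_succ_of_le (T.le_max' t ht)
      calc ∑ t ∈ T, (1/2:ℝ)^t ≤ ∑ t ∈ Finset.range (T.max' hTne + 1), (1/2:ℝ)^t :=
            Finset.sum_le_sum_of_subset_of_nonneg hTsub (fun t _ _ => by positivity)
        _ ≤ 2 := sum_geometric_two_le _
    have h2M : (0:ℝ) < 2 ^ M := zpow_pos (by norm_num) _
    calc (2:ℝ)^M * ∑ c ∈ K, (1/2:ℝ) ^ (φ c) ≤ 2^M * 2 :=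
          mul_le_mul_of_nonneg_left hsum h2M.le
      _ ≤ 2 * B := by nlinarith [h M hMK]

/-- The truncated |f| is integrable. -/
lemma integrable_trunc {f : ℝ → ℝ} (hm : Measurable f) (hf : MemLp f 2 volume) {l : ℝ}
    (hl : 0 < l) :
    Integrable (Set.indicator {y | l < 2 * |f y|} (fun y => |f y|)) volume := by
  have hsm : MeasurableSet {y | l < 2 * |f y|} :=
    measurableSet_lt measurable_const ((hm.abs).const_mul 2)
  have hsq : Integrable (fun x => (f x)^2) volume := by
    have := hf.integrable_sq; simpa [sq] using this
  apply Integrable.mono' (hsq.const_mul (2/l))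
  · exact (hm.abs.indicator hsm).aestronglyMeasurable
  · filter_upwards with x
    rw [Real.norm_eq_abs]
    by_cases hx : x ∈ {y | l < 2 * |f y|}
    · rw [Set.indicator_of_mem hx, abs_abs]
      have hx' : l < 2 * |f x| := hx
      have h0 : 0 < |f x| := by nlinarith
      rw [div_mul_eq_mul_div, le_div_iff₀ hl]
      nlinarith [sq_abs (f x)]
    · rw [Set.indicator_of_notMem hx, abs_zero]
      positivity

set_option maxHeartbeats 1000000 in
/-- L4: weak-type bound via stopping intervals. -/
lemma weak_type (s : Finset D) (a : D → ℝ) {f : ℝ → ℝ} (hm : Measurable f)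
    (hf : MemLp f 2 volume) {l : ℝ} (hl : 0 < l) :
    ∑ I ∈ s.filter (fun I => l * len I ≤ mass f I), (a I) ^ 2 * len I
      ≤ (carlOn s a) ^ 2 *
        ((2 / l) * ∫ x, Set.indicator {y | l < 2 * |f y|} (fun y => |f y|) x) := by
  classical
  set E := ∫ x, (f x)^2 with hE
  set Sl := s.filter (fun I => l * len I ≤ mass f I) with hSl
  -- key: stopped intervals have bounded length
  have key : ∀ J : D, l * len J ≤ mass f J → len J ≤ E / l^2 := by
    intro J hJ
    have h2 := mass_sq_le hf J
    have hlenJ := len_pos J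
    have hmn := mass_nonneg f J
    rw [le_div_iff₀ (by positivity)]
    have hsq : (l * len J)^2 ≤ (mass f J)^2 := pow_le_pow_left₀ (by positivity) hJ 2
    nlinarith
  -- selection of maximal stopping ancestors
  have hsel : ∀ I : D, ∃ n : ℕ, I ∈ Sl →
      (l * len (pa^[n] I) ≤ mass f (pa^[n] I)) ∧
      ∀ m : ℕ, l * len (pa^[m] I) ≤ mass f (pa^[m] I) → m ≤ n := by
    intro I
    by_cases hI : I ∈ Sl
    · -- find N with E/l^2 < len (pa^[N] I)
      obtain ⟨N, hN⟩ : ∃ N : ℕ, E / l^2 / len I < 2^N :=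
        pow_unbounded_of_one_lt _ one_lt_two
      have hbig : ∀ m : ℕ, N ≤ m → ¬ (l * len (pa^[m] I) ≤ mass f (pa^[m] I)) := by
        intro m hNm hcon
        have h1 := key _ hcon
        rw [len_pan] at h1
        have h2 : (2:ℝ)^N ≤ 2^m := by
          apply pow_le_pow_right₀ one_le_two hNm
        have h3 := len_pos I
        rw [div_lt_iff₀ h3] at hN
        nlinarith
      set P : ℕ → Prop := fun n => l * len (pa^[n] I) ≤ mass f (pa^[n] I) with hP
      have hP0 : P 0 := by
        simp only [hP, Function.iterate_zero_apply]
        exact (Finset.mem_filter.1 hI).2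
      refine ⟨Nat.findGreatest P N, fun _ => ⟨?_, ?_⟩⟩
      · exact Nat.findGreatest_spec (Nat.zero_le N) hP0
      · intro m hPm
        by_cases hmN : m ≤ N
        · exact Nat.le_findGreatest hmN hPm
        · exact absurd hPm (hbig m (by omega))
    · exact ⟨0, fun h => absurd h hI⟩
  choose nsel hnsel using hsel
  set Jf : D → D := fun I => pa^[nsel I] I with hJf
  have hJprop : ∀ I ∈ Sl, l * len (Jf I) ≤ mass f (Jf I) := fun I hI => (hnsel I hI).1
  have hJmax : ∀ I ∈ Sl, ∀ m : ℕ, l * len (pa^[m] I) ≤ mass f (pa^[m] I) → m ≤ nsel I :=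
    fun I hI => (hnsel I hI).2
  have hJsub : ∀ I : D, ival I ⊆ ival (Jf I) := fun I => ival_subset_pan _ I
  -- disjointness
  have haux : ∀ I ∈ Sl, ∀ I' ∈ Sl, (Jf I).1 < (Jf I').1 →
      (ival (Jf I) ∩ ival (Jf I')).Nonempty → False := by
    intro I hI I' hI' hscale hx
    have hsub : ival (Jf I) ⊆ ival (Jf I') := subset_of_scale_le hscale.le hx
    have hIfst : (Jf I).1 = I.1 + nsel I := pan_fst _ I
    have hd : I.1 ≤ (Jf I').1 := by omega
    set m : ℕ := ((Jf I').1 - I.1).toNat with hmdef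
    have hm : (pa^[m] I).1 = (Jf I').1 := by rw [pan_fst]; omega
    have hmm : pa^[m] I = Jf I' := by
      apply eq_of_same_scale hm
      obtain ⟨x0, hx0⟩ := ival_nonempty I
      exact ⟨x0, ival_subset_pan m I hx0, hsub (hJsub I hx0)⟩
    have hprop : l * len (pa^[m] I) ≤ mass f (pa^[m] I) := by
      rw [hmm]; exact hJprop I' hI'
    have := hJmax I hI m hprop
    omega
  have hdisj : ∀ I ∈ Sl, ∀ I' ∈ Sl, Jf I ≠ Jf I' → ival (Jf I) ∩ ival (Jf I') = ∅ := by
    intro I hI I' hI' hne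
    by_contra hcon
    have hx : (ival (Jf I) ∩ ival (Jf I')).Nonempty := Set.nonempty_iff_ne_empty.2 hcon
    rcases lt_trichotomy (Jf I).1 (Jf I').1 with h | h | h
    · exact haux I hI I' hI' h hx
    · exact hne (eq_of_same_scale h hx)
    · exact haux I' hI' I hI h (by rwa [Set.inter_comm] at hx)
  -- summation
  set T := Sl.image Jf with hT
  set w : D → ℝ := fun I => (a I)^2 * len I with hw
  have hwn : ∀ I, 0 ≤ w I := fun I => mul_nonneg (sq_nonneg _) (len_pos I).le
  set G := ∫ x, Set.indicator {y | l < 2 * |f y|} (fun y => |f y|) x with hG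
  have hGint := integrable_trunc hm hf hl
  have hGnn : ∀ x, 0 ≤ Set.indicator {y | l < 2 * |f y|} (fun y => |f y|) x := by
    intro x
    exact Set.indicator_nonneg (fun y _ => abs_nonneg _) x
  -- sum of lengths of stopping intervals
  have hlensum : ∑ J ∈ T, len J ≤ (2 / l) * G := by
    have h1 : ∀ J ∈ T, l / 2 * len J ≤ ∫ x in ival J,
        Set.indicator {y | l < 2 * |f y|} (fun y => |f y|) x := by
      intro J hJ
      obtain ⟨I, hI, rfl⟩ := Finset.mem_image.1 hJ
      exact split_bound hm hf hl (hJprop I hI)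
    have h2 : ∑ J ∈ T, ∫ x in ival J,
        Set.indicator {y | l < 2 * |f y|} (fun y => |f y|) x ≤ G := by
      rw [← integral_biUnion_finset T (fun J _ => measurableSet_ival J)]
      · apply setIntegral_le_integral hGint
        exact Filter.Eventually.of_forall hGnn
      · intro J hJ J' hJ' hne
        obtain ⟨I, hI, rfl⟩ := Finset.mem_image.1 hJ
        obtain ⟨I', hI', rfl⟩ := Finset.mem_image.1 hJ'
        exact Set.disjoint_iff_inter_eq_empty.2 (hdisj I hI I' hI' hne)
      · exact fun J _ => hGint.integrableOn
    have h3 : l / 2 * ∑ J ∈ T, len J ≤ G := by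
      rw [Finset.mul_sum]
      exact le_trans (Finset.sum_le_sum h1) h2
    calc ∑ J ∈ T, len J = (2/l) * (l/2 * ∑ J ∈ T, len J) := by field_simp
      _ ≤ (2/l) * G := mul_le_mul_of_nonneg_left h3 (by positivity)
  -- main chain
  calc ∑ I ∈ Sl, w I
      = ∑ J ∈ T, ∑ I ∈ Sl.filter (fun I => Jf I = J), w I :=
        (Finset.sum_fiberwise_of_maps_to (fun I hI => Finset.mem_image_of_mem Jf hI) w).symm
    _ ≤ ∑ J ∈ T, ∑ I ∈ s.filter (fun I => ival I ⊆ ival J), w I := by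
        apply Finset.sum_le_sum
        intro J hJ
        apply Finset.sum_le_sum_of_subset_of_nonneg
        · intro I hI
          obtain ⟨hI1, hI2⟩ := Finset.mem_filter.1 hI
          refine Finset.mem_filter.2 ⟨(Finset.mem_filter.1 hI1).1, ?_⟩
          rw [← hI2]
          exact hJsub I
        · exact fun I _ _ => hwn I
    _ ≤ ∑ J ∈ T, (carlOn s a)^2 * len J := Finset.sum_le_sum fun J _ => carl_bound s a J
    _ = (carlOn s a)^2 * ∑ J ∈ T, len J := by rw [Finset.mul_sum]
    _ ≤ (carlOn s a)^2 * ((2 / l) * G) :=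
        mul_le_mul_of_nonneg_left hlensum (sq_nonneg _)

/-- L8: summing the truncated masses over dyadic levels. -/
lemma levels_sum (K : Finset ℤ) {f : ℝ → ℝ} (hm : Measurable f) (hf : MemLp f 2 volume) :
    ∑ c ∈ K, (2:ℝ)^c * (∫ x, Set.indicator {y | (2:ℝ)^c < 2 * |f y|} (fun y => |f y|) x)
      ≤ 4 * ∫ x, (f x) ^ 2 := by
  have hsq : Integrable (fun x => (f x)^2) volume := by
    have := hf.integrable_sq; simpa [sq] using this
  have hint : ∀ c : ℤ, Integrable
      (fun x => (2:ℝ)^c * Set.indicator {y | (2:ℝ)^c < 2 * |f y|} (fun y => |f y|) x) volume :=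
    fun c => (integrable_trunc hm hf (two_zpow_pos c)).const_mul _
  have h1 : ∑ c ∈ K, (2:ℝ)^c *
      (∫ x, Set.indicator {y | (2:ℝ)^c < 2 * |f y|} (fun y => |f y|) x)
      = ∫ x, ∑ c ∈ K, (2:ℝ)^c * Set.indicator {y | (2:ℝ)^c < 2 * |f y|} (fun y => |f y|) x := by
    rw [integral_finset_sum K (fun c _ => hint c)]
    congr 1
    funext c
    rw [integral_const_mul]
  rw [h1, show (4:ℝ) * ∫ x, (f x)^2 = ∫ x, 4 * (f x)^2 from (integral_const_mul 4 _).symm]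
  apply integral_mono (integrable_finset_sum K (fun c _ => hint c)) (hsq.const_mul 4)
  intro x
  dsimp only
  have hpt : ∑ c ∈ K, (2:ℝ)^c * Set.indicator {y | (2:ℝ)^c < 2 * |f y|} (fun y => |f y|) x
      = (∑ c ∈ K.filter (fun c => (2:ℝ)^c < 2 * |f x|), (2:ℝ)^c) * |f x| := by
    rw [Finset.sum_filter, Finset.sum_mul]
    apply Finset.sum_congr rfl
    intro c _
    by_cases hx : (2:ℝ)^c < 2 * |f x|
    · have hx' : x ∈ {y : ℝ | (2:ℝ)^c < 2 * |f y|} := hx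
      rw [Set.indicator_of_mem hx', if_pos hx]
    · have hx' : x ∉ {y : ℝ | (2:ℝ)^c < 2 * |f y|} := hx
      rw [Set.indicator_of_notMem hx', if_neg hx]
      ring
  rw [hpt]
  have hZ : ∑ c ∈ K.filter (fun c => (2:ℝ)^c < 2 * |f x|), (2:ℝ)^c ≤ 2 * (2 * |f x|) := by
    apply geom_le (by positivity)
    intro c hc
    exact (Finset.mem_filter.1 hc).2
  calc (∑ c ∈ K.filter (fun c => (2:ℝ)^c < 2 * |f x|), (2:ℝ)^c) * |f x|
      ≤ (2 * (2 * |f x|)) * |f x| := by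
        apply mul_le_mul_of_nonneg_right hZ (abs_nonneg _)
    _ = 4 * (f x)^2 := by rw [← sq_abs]; ring

/-- Main estimate for measurable f. -/
lemma main_meas (b : D →₀ ℝ) {f : ℝ → ℝ} (hm : Measurable f) (hf : MemLp f 2 volume) :
    ∑ I ∈ b.support, (b I) ^ 2 * (ip f (haar1 I)) ^ 2 ≤
      32 * carlOn b.support (fun I => b I) ^ 2 * l2normSq f := by
  classical
  set S := b.support with hS
  set carl := carlOn S (fun I => b I) with hcarl
  set A : D → ℝ := fun I => mass f I / len I with hA
  have hAnn : ∀ I, 0 ≤ A I := fun I => div_nonneg (mass_nonneg f I) (len_pos I).le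
  set w : D → ℝ := fun I => (b I)^2 * len I with hw
  -- step 1
  have step1 : ∑ I ∈ S, (b I) ^ 2 * (ip f (haar1 I)) ^ 2 ≤ ∑ I ∈ S, w I * (A I)^2 := by
    apply Finset.sum_le_sum
    intro I _
    have h1 := ip_haar1_sq_le hf I
    have hlen := len_pos I
    have h2 : w I * (A I)^2 = (b I)^2 * ((len I)⁻¹ * (mass f I)^2) := by
      simp only [hw, hA]
      field_simp
    rw [h2]
    exact mul_le_mul_of_nonneg_left h1 (sq_nonneg _)
  -- step 2: restrict to positive average
  set S' := S.filter (fun I => 0 < A I) with hS'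
  have step2 : ∑ I ∈ S, w I * (A I)^2 = ∑ I ∈ S', w I * (A I)^2 := by
    rw [hS']
    apply (Finset.sum_filter_of_ne ?_).symm
    intro I _ hne
    rcases lt_or_eq_of_le (hAnn I) with h | h
    · exact h
    · exact absurd (by rw [← h]; ring) hne
  -- step 3: fiber decomposition along dyadic levels
  set k : D → ℤ := fun I => Int.log 2 (A I) with hk
  set K := S'.image k with hK
  have step3 : ∑ I ∈ S', w I * (A I)^2
      = ∑ c ∈ K, ∑ I ∈ S'.filter (fun I => k I = c), w I * (A I)^2 :=
    (Finset.sum_fiberwise_of_maps_to (fun I hI => Finset.mem_image_of_mem k hI) _).symm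
  -- step 4-6: per-level bound
  have step4 : ∀ c ∈ K, ∑ I ∈ S'.filter (fun I => k I = c), w I * (A I)^2
      ≤ 8 * carl^2 * ((2:ℝ)^c *
          ∫ x, Set.indicator {y | (2:ℝ)^c < 2 * |f y|} (fun y => |f y|) x) := by
    intro c _
    have h2c := two_zpow_pos c
    have hup : ∀ I ∈ S'.filter (fun I => k I = c), w I * (A I)^2 ≤ w I * (4 * ((2:ℝ)^c)^2) := by
      intro I hI
      obtain ⟨hI1, hI2⟩ := Finset.mem_filter.1 hI
      have hpos : 0 < A I := (Finset.mem_filter.1 hI1).2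
      have hub : A I < (2:ℝ)^(c+1) := by
        rw [← hI2]
        exact Int.lt_zpow_succ_log_self (by norm_num) _
      have h1 : (A I)^2 ≤ 4 * ((2:ℝ)^c)^2 := by
        have : (2:ℝ)^(c+1) = 2 * 2^c := by
          rw [zpow_add₀ (by norm_num : (2:ℝ) ≠ 0)]; ring
        nlinarith
      exact mul_le_mul_of_nonneg_left h1 (mul_nonneg (sq_nonneg _) (len_pos I).le)
    have hsub : S'.filter (fun I => k I = c) ⊆ S.filter (fun I => (2:ℝ)^c * len I ≤ mass f I) := by
      intro I hI
      obtain ⟨hI1, hI2⟩ := Finset.mem_filter.1 hI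
      obtain ⟨hIS, hpos⟩ := Finset.mem_filter.1 hI1
      refine Finset.mem_filter.2 ⟨hIS, ?_⟩
      have hlb : (2:ℝ)^c ≤ A I := by
        rw [← hI2]
        exact Int.zpow_log_le_self (by norm_num) hpos
      rw [hA] at hlb
      simp only at hlb
      rw [le_div_iff₀ (len_pos I)] at hlb
      linarith
    calc ∑ I ∈ S'.filter (fun I => k I = c), w I * (A I)^2
        ≤ ∑ I ∈ S'.filter (fun I => k I = c), w I * (4 * ((2:ℝ)^c)^2) :=
          Finset.sum_le_sum hup
      _ = 4 * ((2:ℝ)^c)^2 * ∑ I ∈ S'.filter (fun I => k I = c), w I := by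
          rw [← Finset.sum_mul]; ring
      _ ≤ 4 * ((2:ℝ)^c)^2 * ∑ I ∈ S.filter (fun I => (2:ℝ)^c * len I ≤ mass f I), w I := by
          apply mul_le_mul_of_nonneg_left _ (by positivity)
          exact Finset.sum_le_sum_of_subset_of_nonneg hsub
            (fun I _ _ => mul_nonneg (sq_nonneg _) (len_pos I).le)
      _ ≤ 4 * ((2:ℝ)^c)^2 * (carl^2 * ((2 / (2:ℝ)^c) *
            ∫ x, Set.indicator {y | (2:ℝ)^c < 2 * |f y|} (fun y => |f y|) x)) := by
          apply mul_le_mul_of_nonneg_left _ (by positivity)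
          exact weak_type S (fun I => b I) hm hf h2c
      _ = 8 * carl^2 * ((2:ℝ)^c *
            ∫ x, Set.indicator {y | (2:ℝ)^c < 2 * |f y|} (fun y => |f y|) x) := by
          field_simp
          ring
  -- assemble
  have step7 : ∑ c ∈ K, 8 * carl^2 * ((2:ℝ)^c *
      ∫ x, Set.indicator {y | (2:ℝ)^c < 2 * |f y|} (fun y => |f y|) x)
      ≤ 8 * carl^2 * (4 * ∫ x, (f x)^2) := by
    rw [← Finset.mul_sum]
    apply mul_le_mul_of_nonneg_left (levels_sum K hm hf) (by positivity)
  calc ∑ I ∈ S, (b I) ^ 2 * (ip f (haar1 I)) ^ 2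
      ≤ ∑ I ∈ S, w I * (A I)^2 := step1
    _ = ∑ c ∈ K, ∑ I ∈ S'.filter (fun I => k I = c), w I * (A I)^2 := by
        rw [step2, step3]
    _ ≤ ∑ c ∈ K, 8 * carl^2 * ((2:ℝ)^c *
          ∫ x, Set.indicator {y | (2:ℝ)^c < 2 * |f y|} (fun y => |f y|) x) :=
        Finset.sum_le_sum step4
    _ ≤ 8 * carl^2 * (4 * ∫ x, (f x)^2) := step7
    _ = 32 * carl^2 * l2normSq f := by rw [l2normSq]; ring


/-- The discrete Carleson Embedding Theorem. -/
theorem statement1 :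
    ∃ C : ℝ, 0 < C ∧ ∀ (b : D →₀ ℝ) (f : ℝ → ℝ), MemLp f 2 volume →
      ∑ I ∈ b.support, (b I) ^ 2 * (ip f (haar1 I)) ^ 2 ≤
        C * carlOn b.support (fun I => b I) ^ 2 * l2normSq f := by
  refine ⟨32, by norm_num, ?_⟩
  intro b f hf
  obtain ⟨g, hgsm, hfg⟩ := hf.aestronglyMeasurable
  have hg : MemLp g 2 volume := hf.ae_eq hfg
  have hip : ∀ I, ip f (haar1 I) = ip g (haar1 I) := by
    intro I
    apply integral_congr_ae
    filter_upwards [hfg] with x hx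
    rw [hx]
  have hnorm : l2normSq f = l2normSq g := by
    apply integral_congr_ae
    filter_upwards [hfg] with x hx
    rw [hx]
  have hgoal := main_meas b hgsm.measurable hg
  calc ∑ I ∈ b.support, (b I) ^ 2 * (ip f (haar1 I)) ^ 2
      = ∑ I ∈ b.support, (b I) ^ 2 * (ip g (haar1 I)) ^ 2 := by
        apply Finset.sum_congr rfl
        intro I _
        rw [hip I]
    _ ≤ 32 * carlOn b.support (fun I => b I) ^ 2 * l2normSq g := hgoal
    _ = 32 * carlOn b.support (fun I => b I) ^ 2 * l2normSq f := by rw [hnorm]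


end RandomParaproducts
end
end

section
/- For finitely supported real sequences b = {b_I} and β = {β_J}, with σ independent uniform ±1 random signs, the averaged operator norm of the composition P^{0,1}_b P^{σ,0,0}_β satisfies the exact equality ‖P^{0,1}_b P^{σ,0,0}_β‖_{E,2→2} = sup_{J∈𝒟} [ (β_J²/|J|) Σ_{I∈𝒟, I⊊J} b_I² |I| ]^{1/2}. -/
open MeasureTheory ProbabilityTheory Real Filter
open scoped ENNReal

attribute [local instance] Classical.propDecidable

noncomputable section

namespace RandomParaproducts

lemma len_nonneg (I : D) : 0 ≤ len I := (len_pos I).le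

lemma sqrt_len_pos (I : D) : 0 < Real.sqrt (len I) := Real.sqrt_pos.2 (len_pos I)

lemma len_lc (I : D) : len (lc I) = len I / 2 := by
  simp [len, lc, zpow_sub₀ (by norm_num : (2:ℝ) ≠ 0)]

lemma len_rc (I : D) : len (rc I) = len I / 2 := by
  simp [len, rc, zpow_sub₀ (by norm_num : (2:ℝ) ≠ 0)]

lemma two_zpow_sub_one (n : ℤ) : (2:ℝ) ^ (n - 1) * 2 = (2:ℝ) ^ n := by
  rw [zpow_sub₀ (by norm_num : (2:ℝ) ≠ 0)]; ring

lemma ival_lc (I : D) : ival (lc I) =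
    Set.Ico ((I.2 : ℝ) * (2:ℝ) ^ I.1) (((I.2 : ℝ) + 1/2) * (2:ℝ) ^ I.1) := by
  have h := two_zpow_sub_one I.1
  simp only [ival, lc]
  rw [show ((((2 * I.2 : ℤ)) : ℝ)) * (2:ℝ) ^ (I.1 - 1) = (I.2 : ℝ) * (2:ℝ) ^ I.1 by
        push_cast; linear_combination (I.2 : ℝ) * h,
      show ((((2 * I.2 : ℤ)) : ℝ) + 1) * (2:ℝ) ^ (I.1 - 1) = ((I.2 : ℝ) + 1/2) * (2:ℝ) ^ I.1 by
        push_cast; linear_combination ((I.2 : ℝ) + 1/2) * h]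

lemma ival_rc (I : D) : ival (rc I) =
    Set.Ico (((I.2 : ℝ) + 1/2) * (2:ℝ) ^ I.1) (((I.2 : ℝ) + 1) * (2:ℝ) ^ I.1) := by
  have h := two_zpow_sub_one I.1
  simp only [ival, rc]
  rw [show ((((2 * I.2 + 1 : ℤ)) : ℝ)) * (2:ℝ) ^ (I.1 - 1) = ((I.2 : ℝ) + 1/2) * (2:ℝ) ^ I.1 by
        push_cast; linear_combination ((I.2 : ℝ) + 1/2) * h,
      show ((((2 * I.2 + 1 : ℤ)) : ℝ) + 1) * (2:ℝ) ^ (I.1 - 1) = ((I.2 : ℝ) + 1) * (2:ℝ) ^ I.1 by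
        push_cast; linear_combination ((I.2 : ℝ) + 1) * h]

lemma ival_union (I : D) : ival (lc I) ∪ ival (rc I) = ival I := by
  rw [ival_lc, ival_rc, ival, Set.Ico_union_Ico_eq_Ico]
  · have h := len_pos I; simp only [len] at h; nlinarith
  · have h := len_pos I; simp only [len] at h; nlinarith

lemma disjoint_lc_rc (I : D) : Disjoint (ival (lc I)) (ival (rc I)) := by
  rw [ival_lc, ival_rc]
  exact Set.Ico_disjoint_Ico_same

lemma lc_subset (I : D) : ival (lc I) ⊆ ival I := by
  conv_rhs => rw [← ival_union I]
  exact Set.subset_union_left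

lemma rc_subset (I : D) : ival (rc I) ⊆ ival I := by
  conv_rhs => rw [← ival_union I]
  exact Set.subset_union_right

lemma volume_lc (I : D) : volume (ival (lc I)) = ENNReal.ofReal (len I / 2) := by
  rw [volume_ival, len_lc]

lemma volume_rc (I : D) : volume (ival (rc I)) = ENNReal.ofReal (len I / 2) := by
  rw [volume_ival, len_rc]

/-- The fundamental dyadic nesting lemma. -/
lemma ival_subset_of_le {I J : D} (h : I.1 ≤ J.1) (hne : (ival I ∩ ival J).Nonempty) :
    ival I ⊆ ival J := by
  obtain ⟨x, hxI, hxJ⟩ := hne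
  set m : ℕ := (J.1 - I.1).toNat with hm
  have hmeq : J.1 = I.1 + m := by
    rw [hm, Int.toNat_of_nonneg (by omega)]; ring
  set X : ℤ := 2 ^ m with hX
  have hXR : (2:ℝ) ^ (m:ℤ) = (X:ℝ) := by rw [hX]; push_cast [zpow_natCast]; ring
  have hpow : (2:ℝ) ^ J.1 = (X:ℝ) * (2:ℝ) ^ I.1 := by
    rw [hmeq, zpow_add₀ (by norm_num : (2:ℝ) ≠ 0), hXR, mul_comm]
  have hIpos : (0:ℝ) < (2:ℝ) ^ I.1 := zpow_pos (by norm_num) _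
  simp only [ival, Set.mem_Ico] at hxI hxJ
  have h1 : (J.2 : ℝ) * ((X:ℝ) * (2:ℝ) ^ I.1) < ((I.2 : ℝ) + 1) * (2:ℝ) ^ I.1 := by
    rw [← hpow]; exact lt_of_le_of_lt hxJ.1 hxI.2
  have h2 : (I.2 : ℝ) * (2:ℝ) ^ I.1 < ((J.2 : ℝ) + 1) * ((X:ℝ) * (2:ℝ) ^ I.1) := by
    rw [← hpow]; exact lt_of_le_of_lt hxI.1 hxJ.2
  have i1 : J.2 * X ≤ I.2 := by
    have hr : (J.2:ℝ) * (X:ℝ) < (I.2:ℝ) + 1 := by nlinarith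
    have hr2 : ((J.2 * X : ℤ) : ℝ) < ((I.2 + 1 : ℤ) : ℝ) := by push_cast; linarith
    exact Int.lt_add_one_iff.mp (by exact_mod_cast hr2)
  have i2 : I.2 + 1 ≤ (J.2 + 1) * X := by
    have hr : (I.2:ℝ) < ((J.2:ℝ) + 1) * (X:ℝ) := by nlinarith
    have hr2 : ((I.2 : ℤ) : ℝ) < (((J.2 + 1) * X : ℤ) : ℝ) := by push_cast; linarith
    exact Int.lt_iff_add_one_le.mp (by exact_mod_cast hr2)
  apply Set.Ico_subset_Ico
  · rw [hpow]
    have : ((J.2 * X : ℤ) : ℝ) ≤ ((I.2 : ℤ) : ℝ) := by exact_mod_cast i1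
    push_cast at this
    nlinarith
  · rw [hpow]
    have : ((I.2 + 1 : ℤ) : ℝ) ≤ (((J.2 + 1) * X : ℤ) : ℝ) := by exact_mod_cast i2
    push_cast at this
    nlinarith

lemma ival_tricho (I J : D) :
    ival I ⊆ ival J ∨ ival J ⊆ ival I ∨ Disjoint (ival I) (ival J) := by
  by_cases hne : (ival I ∩ ival J).Nonempty
  · rcases le_total I.1 J.1 with h | h
    · exact Or.inl (ival_subset_of_le h hne)
    · exact Or.inr (Or.inl (ival_subset_of_le h (by rwa [Set.inter_comm] at hne)))
  · exact Or.inr (Or.inr (Set.disjoint_iff_inter_eq_empty.2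
      (Set.not_nonempty_iff_eq_empty.mp hne)))

lemma ival_inj : Function.Injective ival := by
  intro I J h
  have h2 : ival I = ival J := h
  simp only [ival] at h2
  have hIpos : (0:ℝ) < (2:ℝ) ^ I.1 := zpow_pos (by norm_num) _
  have hJpos : (0:ℝ) < (2:ℝ) ^ J.1 := zpow_pos (by norm_num) _
  have hlt : (I.2 : ℝ) * (2:ℝ) ^ I.1 < ((I.2 : ℝ) + 1) * (2:ℝ) ^ I.1 := by nlinarith
  rw [Set.Ico_eq_Ico_iff (Or.inl hlt)] at h2
  obtain ⟨ha, hb⟩ := h2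
  have hlen : (2:ℝ) ^ I.1 = (2:ℝ) ^ J.1 := by nlinarith
  have h1 : I.1 = J.1 := by
    have inj : Function.Injective (fun n : ℤ => (2:ℝ) ^ n) :=
      zpow_right_injective₀ (by norm_num) (by norm_num)
    exact inj hlen
  have h2 : I.2 = J.2 := by
    have : (I.2 : ℝ) = (J.2 : ℝ) := by
      rw [hlen] at ha
      exact mul_right_cancel₀ hJpos.ne' ha
    exact_mod_cast this
  exact Prod.ext h1 h2
lemma ival_eq_of_subset_not_ssubset {I J : D} (hsub : ival I ⊆ ival J)
    (hns : ¬ ival I ⊂ ival J) : ival J ⊆ ival I := by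
  rcases eq_or_ne (ival I) (ival J) with h | h
  · exact h.symm.subset
  · exact absurd (HasSubset.Subset.ssubset_of_ne hsub h) hns

lemma subset_half_of_ssubset {I J : D} (h : ival I ⊂ ival J) :
    ival I ⊆ ival (lc J) ∨ ival I ⊆ ival (rc J) := by
  have hlt : I.1 < J.1 := by
    by_contra hle
    push_neg at hle
    have : ival J ⊆ ival I := by
      apply ival_subset_of_le hle
      obtain ⟨x, hx⟩ := ival_nonempty I
      exact ⟨x, h.subset hx, hx⟩
    exact h.ne (subset_antisymm h.subset this)
  obtain ⟨x, hx⟩ := ival_nonempty I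
  have hxJ : x ∈ ival (lc J) ∪ ival (rc J) := by rw [ival_union]; exact h.subset hx
  have hle : I.1 ≤ J.1 - 1 := by omega
  rcases hxJ with hxl | hxr
  · exact Or.inl (ival_subset_of_le hle ⟨x, hx, hxl⟩)
  · exact Or.inr (ival_subset_of_le hle ⟨x, hx, hxr⟩)

/-- The indicator of a set, as a real function. -/
def indC (A : Set ℝ) : ℝ → ℝ := A.indicator fun _ => 1

lemma haar_eq (I : D) : haar I = fun x =>
    (Real.sqrt (len I))⁻¹ * (indC (ival (rc I)) x - indC (ival (lc I)) x) := rfl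

lemma haar1_eq (I : D) : haar1 I = fun x => (Real.sqrt (len I))⁻¹ * indC (ival I) x := rfl

lemma indC_mul_indC (A B : Set ℝ) (x : ℝ) : indC A x * indC B x = indC (A ∩ B) x := by
  simp only [indC, ← Set.inter_indicator_mul, one_mul]

lemma integrable_indC {A : Set ℝ} (hA : MeasurableSet A) (hfin : volume A ≠ ⊤) :
    Integrable (indC A) := by
  rw [indC, integrable_indicator_iff hA]
  exact integrableOn_const hfin

lemma integral_indC {A : Set ℝ} (hA : MeasurableSet A) :
    ∫ x, indC A x = (volume A).toReal := by
  rw [indC, integral_indicator hA]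
  simp
  rfl

lemma measurable_indC {A : Set ℝ} (hA : MeasurableSet A) : Measurable (indC A) :=
  measurable_const.indicator hA

lemma indC_bound (A : Set ℝ) (x : ℝ) : ‖indC A x‖ ≤ 1 := by
  simp only [indC, Set.indicator_apply]
  split_ifs <;> simp

lemma measurable_haar (I : D) : Measurable (haar I) := by
  rw [haar_eq]
  exact (((measurable_indC (measurableSet_ival _)).sub
    (measurable_indC (measurableSet_ival _))).const_mul _)

lemma measurable_haar1 (I : D) : Measurable (haar1 I) := by
  rw [haar1_eq]
  exact ((measurable_indC (measurableSet_ival _)).const_mul _)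

lemma integrable_haar (I : D) : Integrable (haar I) := by
  rw [haar_eq]
  exact (((integrable_indC (measurableSet_ival _) (volume_ival_ne_top _)).sub
    (integrable_indC (measurableSet_ival _) (volume_ival_ne_top _))).const_mul _)

lemma integrable_haar1 (I : D) : Integrable (haar1 I) := by
  rw [haar1_eq]
  exact ((integrable_indC (measurableSet_ival _) (volume_ival_ne_top _)).const_mul _)

lemma haar_bound (I : D) (x : ℝ) : ‖haar I x‖ ≤ 2 * (Real.sqrt (len I))⁻¹ := by
  rw [haar_eq]
  have h1 := indC_bound (ival (rc I)) x
  have h2 := indC_bound (ival (lc I)) x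
  have h3 : (0:ℝ) ≤ (Real.sqrt (len I))⁻¹ := inv_nonneg.2 (Real.sqrt_nonneg _)
  rw [norm_mul, Real.norm_eq_abs ((Real.sqrt (len I))⁻¹), abs_of_nonneg h3]
  calc (Real.sqrt (len I))⁻¹ * ‖indC (ival (rc I)) x - indC (ival (lc I)) x‖
      ≤ (Real.sqrt (len I))⁻¹ * 2 := by
        apply mul_le_mul_of_nonneg_left _ h3
        calc ‖indC (ival (rc I)) x - indC (ival (lc I)) x‖
            ≤ ‖indC (ival (rc I)) x‖ + ‖indC (ival (lc I)) x‖ := norm_sub_le _ _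
          _ ≤ 2 := by linarith
    _ = 2 * (Real.sqrt (len I))⁻¹ := by ring

lemma haar1_bound (I : D) (x : ℝ) : ‖haar1 I x‖ ≤ (Real.sqrt (len I))⁻¹ := by
  rw [haar1_eq]
  have h1 := indC_bound (ival I) x
  have h3 : (0:ℝ) ≤ (Real.sqrt (len I))⁻¹ := inv_nonneg.2 (Real.sqrt_nonneg _)
  rw [norm_mul, Real.norm_eq_abs ((Real.sqrt (len I))⁻¹), abs_of_nonneg h3]
  nlinarith [norm_nonneg (indC (ival I) x)]

lemma integrable_haar_mul_haar (I J : D) : Integrable (fun x => haar I x * haar J x) :=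
  (integrable_haar J).bdd_mul (measurable_haar I).aestronglyMeasurable (Eventually.of_forall (haar_bound I))

lemma integrable_haar_mul_haar1 (I J : D) : Integrable (fun x => haar I x * haar1 J x) :=
  (integrable_haar1 J).bdd_mul (measurable_haar I).aestronglyMeasurable (Eventually.of_forall (haar_bound I))

lemma integrable_haar_mul_indC (I : D) {A : Set ℝ} (hA : MeasurableSet A)
    (hfin : volume A ≠ ⊤) : Integrable (fun x => haar I x * indC A x) :=
  (integrable_indC hA hfin).bdd_mul (measurable_haar I).aestronglyMeasurable (Eventually.of_forall (haar_bound I))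

lemma volume_inter_ne_top (I : D) (A : Set ℝ) : volume (ival I ∩ A) ≠ ⊤ :=
  fun h => (volume_ival_ne_top I) (top_le_iff.mp (h ▸ measure_mono Set.inter_subset_left))

lemma integral_haar_mul_indC (I : D) {A : Set ℝ} (hA : MeasurableSet A) :
    ∫ x, haar I x * indC A x =
      (Real.sqrt (len I))⁻¹ *
        ((volume (ival (rc I) ∩ A)).toReal - (volume (ival (lc I) ∩ A)).toReal) := by
  have key : ∀ x, haar I x * indC A x =
      (Real.sqrt (len I))⁻¹ * (indC (ival (rc I) ∩ A) x - indC (ival (lc I) ∩ A) x) := by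
    intro x
    rw [haar_eq, ← indC_mul_indC, ← indC_mul_indC]
    ring
  simp only [key]
  rw [integral_const_mul,
    integral_sub (integrable_indC ((measurableSet_ival _).inter hA) (volume_inter_ne_top _ _))
      (integrable_indC ((measurableSet_ival _).inter hA) (volume_inter_ne_top _ _)),
    integral_indC ((measurableSet_ival _).inter hA),
    integral_indC ((measurableSet_ival _).inter hA)]

lemma integral_haar_mul_indC_of_superset {I : D} {A : Set ℝ} (hA : MeasurableSet A)
    (h : ival I ⊆ A) : ∫ x, haar I x * indC A x = 0 := by
  rw [integral_haar_mul_indC I hA,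
    Set.inter_eq_left.2 ((rc_subset I).trans h),
    Set.inter_eq_left.2 ((lc_subset I).trans h), volume_rc, volume_lc]
  ring

lemma integral_haar_mul_indC_of_disjoint {I : D} {A : Set ℝ} (hA : MeasurableSet A)
    (h : Disjoint (ival I) A) : ∫ x, haar I x * indC A x = 0 := by
  rw [integral_haar_mul_indC I hA,
    Set.disjoint_iff_inter_eq_empty.mp (h.mono_left (rc_subset I)),
    Set.disjoint_iff_inter_eq_empty.mp (h.mono_left (lc_subset I))]
  simp

lemma integral_haar_mul_indC_of_subset_rc {I : D} {A : Set ℝ} (hA : MeasurableSet A)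
    (h : A ⊆ ival (rc I)) : ∫ x, haar I x * indC A x =
      (Real.sqrt (len I))⁻¹ * (volume A).toReal := by
  rw [integral_haar_mul_indC I hA, Set.inter_eq_right.2 h,
    Set.disjoint_iff_inter_eq_empty.mp ((disjoint_lc_rc I).mono_right h)]
  simp

lemma integral_haar_mul_indC_of_subset_lc {I : D} {A : Set ℝ} (hA : MeasurableSet A)
    (h : A ⊆ ival (lc I)) : ∫ x, haar I x * indC A x =
      -((Real.sqrt (len I))⁻¹ * (volume A).toReal) := by
  rw [integral_haar_mul_indC I hA, Set.inter_eq_right.2 h,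
    Set.disjoint_iff_inter_eq_empty.mp (((disjoint_lc_rc I).symm).mono_right h)]
  simp
lemma sq_sqrt_len (I : D) : Real.sqrt (len I) ^ 2 = len I := Real.sq_sqrt (len_nonneg I)

lemma ip_haar_haar1 (J I : D) : ip (haar J) (haar1 I) =
    (Real.sqrt (len I))⁻¹ * ∫ x, haar J x * indC (ival I) x := by
  rw [ip, ← integral_const_mul]
  congr 1
  ext x
  rw [haar1_eq]
  ring

lemma sq_ip_aux (I J : D) :
    ((Real.sqrt (len I))⁻¹ * ((Real.sqrt (len J))⁻¹ * len I)) ^ 2 = len I / len J := by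
  have h1 := sq_sqrt_len I
  have h2 := sq_sqrt_len J
  have h3 := (sqrt_len_pos I).ne'
  have h4 := (sqrt_len_pos J).ne'
  rw [show ((Real.sqrt (len I))⁻¹ * ((Real.sqrt (len J))⁻¹ * len I)) ^ 2
      = (len I)^2 * ((Real.sqrt (len I))^2)⁻¹ * ((Real.sqrt (len J))^2)⁻¹ by ring,
    h1, h2]
  have h5 := (len_pos I).ne'
  have h6 := (len_pos J).ne'
  field_simp

lemma ip_haar_haar1_sq (J I : D) :
    (ip (haar J) (haar1 I)) ^ 2 = if ival I ⊂ ival J then len I / len J else 0 := by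
  by_cases hss : ival I ⊂ ival J
  · rw [if_pos hss]
    rcases subset_half_of_ssubset hss with h | h
    · rw [ip_haar_haar1, integral_haar_mul_indC_of_subset_lc (measurableSet_ival I) h,
        toReal_volume_ival, mul_neg, neg_sq]
      exact sq_ip_aux I J
    · rw [ip_haar_haar1, integral_haar_mul_indC_of_subset_rc (measurableSet_ival I) h,
        toReal_volume_ival]
      exact sq_ip_aux I J
  · rw [if_neg hss]
    have hzero : ∫ x, haar J x * indC (ival I) x = 0 := by
      rcases ival_tricho I J with h | h | h
      · exact integral_haar_mul_indC_of_superset (measurableSet_ival I)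
          (ival_eq_of_subset_not_ssubset h hss)
      · exact integral_haar_mul_indC_of_superset (measurableSet_ival I) h
      · exact integral_haar_mul_indC_of_disjoint (measurableSet_ival I) h.symm
    rw [ip_haar_haar1, hzero]
    ring

lemma ip_haar_split (f : ℝ → ℝ) (J : D)
    (h1 : Integrable (fun x => f x * indC (ival (rc J)) x))
    (h2 : Integrable (fun x => f x * indC (ival (lc J)) x)) :
    ip f (haar J) = (Real.sqrt (len J))⁻¹ *
      ((∫ x, f x * indC (ival (rc J)) x) - ∫ x, f x * indC (ival (lc J)) x) := by
  rw [ip, ← integral_sub h1 h2, ← integral_const_mul]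
  congr 1
  ext x
  rw [haar_eq]
  ring

lemma ip_haar_haar (I J : D) : ip (haar I) (haar J) = if I = J then 1 else 0 := by
  have split := ip_haar_split (haar I) J
    (integrable_haar_mul_indC I (measurableSet_ival _) (volume_ival_ne_top _))
    (integrable_haar_mul_indC I (measurableSet_ival _) (volume_ival_ne_top _))
  by_cases hIJ : I = J
  · subst hIJ
    rw [if_pos rfl, split,
      integral_haar_mul_indC_of_subset_rc (measurableSet_ival _) (subset_refl _),
      integral_haar_mul_indC_of_subset_lc (measurableSet_ival _) (subset_refl _),
      toReal_volume_ival, toReal_volume_ival, len_rc, len_lc]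
    have h1 := sq_sqrt_len I
    have h3 := (sqrt_len_pos I).ne'
    have h5 := (len_pos I).ne'
    rw [show (Real.sqrt (len I))⁻¹ * ((Real.sqrt (len I))⁻¹ * (len I / 2) - -((Real.sqrt (len I))⁻¹ * (len I / 2)))
        = len I * ((Real.sqrt (len I))^2)⁻¹ by ring, h1]
    field_simp
  · rw [if_neg hIJ]
    have hne : ival I ≠ ival J := fun h => hIJ (ival_inj h)
    rcases ival_tricho I J with h | h | h
    · -- ival I ⊊ ival J
      have hss : ival I ⊂ ival J := HasSubset.Subset.ssubset_of_ne h hne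
      rcases subset_half_of_ssubset hss with hh | hh
      · rw [split,
          integral_haar_mul_indC_of_disjoint (measurableSet_ival _)
            (((disjoint_lc_rc J).mono_left hh).symm.symm),
          integral_haar_mul_indC_of_superset (measurableSet_ival _) hh]
        ring
      · rw [split,
          integral_haar_mul_indC_of_superset (measurableSet_ival _) hh,
          integral_haar_mul_indC_of_disjoint (measurableSet_ival _)
            ((disjoint_lc_rc J).symm.mono_left hh)]
        ring
    · -- ival J ⊊ ival I
      have hss : ival J ⊂ ival I := HasSubset.Subset.ssubset_of_ne h (Ne.symm hne)
      rcases subset_half_of_ssubset hss with hh | hh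
      · rw [split,
          integral_haar_mul_indC_of_subset_lc (measurableSet_ival _)
            ((rc_subset J).trans hh),
          integral_haar_mul_indC_of_subset_lc (measurableSet_ival _)
            ((lc_subset J).trans hh),
          toReal_volume_ival, toReal_volume_ival, len_rc, len_lc]
        ring
      · rw [split,
          integral_haar_mul_indC_of_subset_rc (measurableSet_ival _)
            ((rc_subset J).trans hh),
          integral_haar_mul_indC_of_subset_rc (measurableSet_ival _)
            ((lc_subset J).trans hh),
          toReal_volume_ival, toReal_volume_ival, len_rc, len_lc]
        ring
    · -- disjoint
      rw [split,
        integral_haar_mul_indC_of_disjoint (measurableSet_ival _)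
          (h.mono_right (rc_subset J)),
        integral_haar_mul_indC_of_disjoint (measurableSet_ival _)
          (h.mono_right (lc_subset J))]
      ring
lemma l2normSq_sum_haar (s : Finset D) (c : D → ℝ) :
    l2normSq (fun x => ∑ I ∈ s, c I * haar I x) = ∑ I ∈ s, (c I) ^ 2 := by
  rw [l2normSq]
  have expand : ∀ x : ℝ, (∑ I ∈ s, c I * haar I x) ^ 2
      = ∑ I ∈ s, ∑ J ∈ s, (c I * c J) * (haar I x * haar J x) := by
    intro x
    rw [sq, Finset.sum_mul_sum]
    exact Finset.sum_congr rfl fun I _ => Finset.sum_congr rfl fun J _ => by ring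
  simp only [expand]
  rw [integral_finset_sum _ (fun I _ => integrable_finset_sum _
    (fun J _ => ((integrable_haar_mul_haar I J).const_mul _)))]
  refine Finset.sum_congr rfl fun I hI => ?_
  rw [integral_finset_sum _ (fun J _ => ((integrable_haar_mul_haar I J).const_mul _))]
  have : ∀ J ∈ s, ∫ x, (c I * c J) * (haar I x * haar J x)
      = if I = J then c I * c J else 0 := by
    intro J _
    rw [integral_const_mul]
    have : ∫ x, haar I x * haar J x = ip (haar I) (haar J) := rfl
    rw [this, ip_haar_haar]
    split_ifs <;> simp
  rw [Finset.sum_congr rfl this, Finset.sum_ite_eq s I (fun J => c I * c J), if_pos hI, sq]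

lemma inner_haarLp (I J : D) : inner ℝ (haarLp I) (haarLp J) = ip (haar I) (haar J) := by
  rw [MeasureTheory.L2.inner_def, ip]
  apply integral_congr_ae
  filter_upwards [(memℒp_haar I).coeFn_toLp, (memℒp_haar J).coeFn_toLp] with x h1 h2
  rw [haarLp, haarLp] at *
  rw [h1, h2]
  simp [RCLike.inner_apply, conj_trivial, mul_comm]

lemma orthonormal_haarLp : Orthonormal ℝ haarLp := by
  rw [orthonormal_iff_ite]
  intro I J
  rw [inner_haarLp, ip_haar_haar]

lemma inner_haarLp_toLp (f : ℝ → ℝ) (hf : MemLp f 2 volume) (J : D) :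
    inner ℝ (haarLp J) (hf.toLp f) = ip f (haar J) := by
  rw [MeasureTheory.L2.inner_def, ip]
  apply integral_congr_ae
  filter_upwards [(memℒp_haar J).coeFn_toLp, hf.coeFn_toLp] with x h1 h2
  rw [haarLp] at *
  rw [h1, h2]
  simp [RCLike.inner_apply, conj_trivial, mul_comm]

lemma bessel (f : ℝ → ℝ) (hf : UnitL2 f) (t : Finset D) :
    ∑ J ∈ t, (ip f (haar J)) ^ 2 ≤ 1 := by
  have h := Orthonormal.sum_inner_products_le (𝕜 := ℝ) (hf.1.toLp f) (s := t)
    orthonormal_haarLp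
  have hnorm : ‖hf.1.toLp f‖ = 1 := by
    rw [Lp.norm_toLp, hf.2]
    simp
  rw [hnorm] at h
  calc ∑ J ∈ t, (ip f (haar J)) ^ 2
      = ∑ J ∈ t, ‖inner ℝ (haarLp J) (hf.1.toLp f)‖ ^ 2 := by
        refine Finset.sum_congr rfl fun J _ => ?_
        rw [inner_haarLp_toLp f hf.1 J, Real.norm_eq_abs, sq_abs]
    _ ≤ 1 := by simpa using h

lemma unitL2_haar (J : D) : UnitL2 (haar J) := by
  refine ⟨memℒp_haar J, ?_⟩
  have hnorm : ‖haarLp J‖ = 1 := orthonormal_haarLp.1 J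
  rw [haarLp, Lp.norm_toLp] at hnorm
  rw [← ENNReal.toReal_eq_one_iff]
  exact hnorm

instance : Nonempty {f : ℝ → ℝ // UnitL2 f} := ⟨⟨haar (0, 0), unitL2_haar _⟩⟩
section SignMeasure

variable {μ : Measure (D → ℝ)}

lemma measurable_eval (J : D) : Measurable (fun σ : D → ℝ => σ J) := measurable_pi_apply J

lemma ae_sign (hμ : IsSignMeasure μ) (J : D) : ∀ᵐ σ ∂μ, σ J = 1 ∨ σ J = -1 := by
  have hmap := hμ.2.2 J
  have hset : {x : ℝ | x = 1 ∨ x = -1} = {1, -1} := by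
    ext x; simp [Set.mem_insert_iff]
  have hmeas : MeasurableSet {x : ℝ | x = 1 ∨ x = -1} := by
    rw [hset]; exact ((Set.finite_singleton (-1:ℝ)).insert 1).measurableSet
  rw [ae_iff]
  have heq : {σ : D → ℝ | ¬(σ J = 1 ∨ σ J = -1)}
      = (fun σ : D → ℝ => σ J) ⁻¹' {x : ℝ | x = 1 ∨ x = -1}ᶜ := rfl
  rw [heq, ← Measure.map_apply (measurable_eval J) hmeas.compl, hmap]
  have h1 : (1:ℝ) ∈ {x : ℝ | x = 1 ∨ x = -1} := by simp
  have h2 : (-1:ℝ) ∈ {x : ℝ | x = 1 ∨ x = -1} := by simp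
  simp only [Measure.smul_apply, Measure.add_apply,
    Measure.dirac_apply' _ hmeas.compl]
  rw [Set.indicator_of_notMem (by simpa using h1), Set.indicator_of_notMem (by simpa using h2)]
  simp

lemma integrable_eval_mul (hμ : IsSignMeasure μ) (J K : D) :
    Integrable (fun σ => σ J * σ K) μ := by
  haveI := hμ.1
  refine Integrable.mono' (integrable_const 1)
    (((measurable_eval J).mul (measurable_eval K)).aestronglyMeasurable) ?_
  filter_upwards [ae_sign hμ J, ae_sign hμ K] with σ h1 h2
  rcases h1 with h1 | h1 <;> rcases h2 with h2 | h2 <;> simp [h1, h2]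

lemma integrable_eval (hμ : IsSignMeasure μ) (J : D) :
    Integrable (fun σ => σ J) μ := by
  haveI := hμ.1
  refine Integrable.mono' (integrable_const 1)
    ((measurable_eval J).aestronglyMeasurable) ?_
  filter_upwards [ae_sign hμ J] with σ h1
  rcases h1 with h1 | h1 <;> simp [h1]

lemma integral_eval (hμ : IsSignMeasure μ) (J : D) : ∫ σ, σ J ∂μ = 0 := by
  have h : ∫ σ, σ J ∂μ = ∫ x, x ∂(μ.map (fun σ => σ J)) := by
    exact (integral_map (measurable_eval J).aemeasurable
      (f := fun x : ℝ => x) aestronglyMeasurable_id).symm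
  rw [h, hμ.2.2 J, integral_smul_measure]
  have i1 : Integrable (fun x : ℝ => x) (Measure.dirac (1:ℝ)) := by
    rw [integrable_congr (ae_eq_dirac (fun x : ℝ => x))]
    exact integrable_const _
  have i2 : Integrable (fun x : ℝ => x) (Measure.dirac (-1:ℝ)) := by
    rw [integrable_congr (ae_eq_dirac (fun x : ℝ => x))]
    exact integrable_const _
  rw [integral_add_measure i1 i2, integral_dirac, integral_dirac]
  simp

lemma integral_eval_mul (hμ : IsSignMeasure μ) (J K : D) :
    ∫ σ, σ J * σ K ∂μ = if J = K then 1 else 0 := by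
  haveI := hμ.1
  by_cases h : J = K
  · subst h
    rw [if_pos rfl]
    have hae : ∀ᵐ σ ∂μ, σ J * σ J = 1 := by
      filter_upwards [ae_sign hμ J] with σ h1
      rcases h1 with h1 | h1 <;> simp [h1]
    rw [integral_congr_ae hae]
    simp
  · rw [if_neg h]
    have hind : IndepFun (fun σ : D → ℝ => σ J) (fun σ : D → ℝ => σ K) μ :=
      hμ.2.1.indepFun h
    have := hind.integral_mul_eq_mul_integral (measurable_eval J).aestronglyMeasurable
      (measurable_eval K).aestronglyMeasurable
    have heq : ∫ σ, σ J * σ K ∂μ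
        = ∫ σ, ((fun σ : D → ℝ => σ J) * (fun σ : D → ℝ => σ K)) σ ∂μ := rfl
    rw [heq]
    rw [show (∫ σ, ((fun σ : D → ℝ => σ J) * (fun σ : D → ℝ => σ K)) σ ∂μ)
      = integral μ ((fun σ : D → ℝ => σ J) * (fun σ : D → ℝ => σ K)) from rfl, this,
      integral_eval hμ J, integral_eval hμ K]
    ring

lemma sign_sum_sq_expand (t : Finset D) (d : D → ℝ) (σ : D → ℝ) :
    (∑ J ∈ t, σ J * d J) ^ 2 = ∑ J ∈ t, ∑ K ∈ t, (d J * d K) * (σ J * σ K) := by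
  rw [sq, Finset.sum_mul_sum]
  exact Finset.sum_congr rfl fun J _ => Finset.sum_congr rfl fun K _ => by ring

lemma integrable_sign_sum_sq (hμ : IsSignMeasure μ) (t : Finset D) (d : D → ℝ) :
    Integrable (fun σ => (∑ J ∈ t, σ J * d J) ^ 2) μ := by
  have : (fun σ : D → ℝ => (∑ J ∈ t, σ J * d J) ^ 2)
      = fun σ => ∑ J ∈ t, ∑ K ∈ t, (d J * d K) * (σ J * σ K) := by
    ext σ; exact sign_sum_sq_expand t d σ
  rw [this]
  exact integrable_finset_sum _ (fun J _ => integrable_finset_sum _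
    (fun K _ => ((integrable_eval_mul hμ J K).const_mul _)))

lemma integral_sign_sum_sq (hμ : IsSignMeasure μ) (t : Finset D) (d : D → ℝ) :
    ∫ σ, (∑ J ∈ t, σ J * d J) ^ 2 ∂μ = ∑ J ∈ t, (d J) ^ 2 := by
  simp only [sign_sum_sq_expand t d]
  rw [integral_finset_sum _ (fun J _ => integrable_finset_sum _
    (fun K _ => ((integrable_eval_mul hμ J K).const_mul _)))]
  refine Finset.sum_congr rfl fun J hJ => ?_
  rw [integral_finset_sum _ (fun K _ => ((integrable_eval_mul hμ J K).const_mul _))]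
  have step : ∀ K ∈ t, ∫ σ, (d J * d K) * (σ J * σ K) ∂μ
      = if J = K then d J * d K else 0 := by
    intro K _
    rw [integral_const_mul, integral_eval_mul hμ J K]
    split_ifs <;> simp
  rw [Finset.sum_congr rfl step, Finset.sum_ite_eq t J (fun K => d J * d K), if_pos hJ, sq]

end SignMeasure
lemma msum (b : D →₀ ℝ) (J : D) :
    ∑ I ∈ b.support, (b I) ^ 2 * (ip (haar J) (haar1 I)) ^ 2
      = (∑ I ∈ b.support.filter (fun I => ival I ⊂ ival J), (b I) ^ 2 * len I) / len J := by
  rw [Finset.sum_filter, Finset.sum_div]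
  refine Finset.sum_congr rfl fun I _ => ?_
  rw [ip_haar_haar1_sq]
  split_ifs with h
  · rw [div_eq_mul_inv, div_eq_mul_inv]; ring
  · simp

lemma key_integral (b β : D →₀ ℝ) {μ : Measure (D → ℝ)} (hμ : IsSignMeasure μ) (f : ℝ → ℝ) :
    ∫ σ, l2normSq (P false true b (Psig σ false false β f)) ∂μ
      = ∑ J ∈ β.support, (ip f (haar J)) ^ 2 *
          ((β J) ^ 2 / len J *
            ∑ I ∈ b.support.filter (fun I => ival I ⊂ ival J), (b I) ^ 2 * len I) := by
  have hip : ∀ (σ : D → ℝ) (I : D), ip (Psig σ false false β f) (haar1 I)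
      = ∑ J ∈ β.support, σ J * ((β J * ip f (haar J)) * ip (haar J) (haar1 I)) := by
    intro σ I
    have hpt : ∀ x, Psig σ false false β f x * haar1 I x
        = ∑ J ∈ β.support, (σ J * (β J * ip f (haar J))) * (haar J x * haar1 I x) := by
      intro x
      show (∑ J ∈ β.support, σ J * (β J * ip f (haar J) * haar J x)) * haar1 I x = _
      rw [Finset.sum_mul]
      exact Finset.sum_congr rfl fun J _ => by ring
    rw [ip]
    simp only [hpt]
    rw [integral_finset_sum _ (fun J _ => ((integrable_haar_mul_haar1 J I).const_mul _))]
    refine Finset.sum_congr rfl fun J _ => ?_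
    rw [integral_const_mul]
    show σ J * (β J * ip f (haar J)) * ip (haar J) (haar1 I) = _
    ring
  have hintegrand : ∀ σ : D → ℝ, l2normSq (P false true b (Psig σ false false β f))
      = ∑ I ∈ b.support, (b I) ^ 2 *
          (∑ J ∈ β.support, σ J * ((β J * ip f (haar J)) * ip (haar J) (haar1 I))) ^ 2 := by
    intro σ
    have hfun_eq : P false true b (Psig σ false false β f)
        = fun x => ∑ I ∈ b.support,
            (b I * ip (Psig σ false false β f) (haar1 I)) * haar I x := rfl
    rw [hfun_eq, l2normSq_sum_haar]
    refine Finset.sum_congr rfl fun I _ => ?_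
    rw [hip σ I, mul_pow]
  simp only [hintegrand]
  rw [integral_finset_sum _ (fun I _ =>
    ((integrable_sign_sum_sq hμ β.support _).const_mul _))]
  have hper : ∀ I ∈ b.support,
      ∫ σ, (b I) ^ 2 *
        (∑ J ∈ β.support, σ J * ((β J * ip f (haar J)) * ip (haar J) (haar1 I))) ^ 2 ∂μ
      = ∑ J ∈ β.support, (b I) ^ 2 * ((β J * ip f (haar J)) * ip (haar J) (haar1 I)) ^ 2 := by
    intro I _
    rw [integral_const_mul, integral_sign_sum_sq hμ, Finset.mul_sum]
  rw [Finset.sum_congr rfl hper, Finset.sum_comm]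
  refine Finset.sum_congr rfl fun J _ => ?_
  have step : ∀ I ∈ b.support,
      (b I) ^ 2 * ((β J * ip f (haar J)) * ip (haar J) (haar1 I)) ^ 2
      = (β J * ip f (haar J)) ^ 2 * ((b I) ^ 2 * (ip (haar J) (haar1 I)) ^ 2) := by
    intro I _; ring
  rw [Finset.sum_congr rfl step, ← Finset.mul_sum, msum b J]
  rw [div_eq_mul_inv, div_eq_mul_inv]
  ring

/-- Exact formula for the averaged operator norm of `P^{0,1}_b P^{σ,0,0}_β`. -/
theorem statement7 (b β : D →₀ ℝ) (μ : Measure (D → ℝ)) (hμ : IsSignMeasure μ) :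
    avgOpNorm μ (fun σ f => P false true b (Psig σ false false β f)) =
      ⨆ J : D, Real.sqrt ((β J) ^ 2 / len J *
        ∑ I ∈ b.support.filter (fun I => ival I ⊂ ival J), (b I) ^ 2 * len I) := by
  set Rval : D → ℝ := fun J => (β J) ^ 2 / len J *
      ∑ I ∈ b.support.filter (fun I => ival I ⊂ ival J), (b I) ^ 2 * len I with hRval
  have hR0 : ∀ J, 0 ≤ Rval J := fun J =>
    mul_nonneg (div_nonneg (sq_nonneg _) (len_nonneg J))
      (Finset.sum_nonneg fun I _ => mul_nonneg (sq_nonneg _) (len_nonneg I))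
  -- a uniform bound
  set C : ℝ := (∑ J ∈ β.support, (β J) ^ 2) * (∑ I ∈ b.support, (b I) ^ 2) with hC
  have hRC : ∀ J, Rval J ≤ C := by
    intro J
    have hsum : ∑ I ∈ b.support.filter (fun I => ival I ⊂ ival J), (b I) ^ 2 * len I
        ≤ len J * ∑ I ∈ b.support, (b I) ^ 2 := by
      calc ∑ I ∈ b.support.filter (fun I => ival I ⊂ ival J), (b I) ^ 2 * len I
          ≤ ∑ I ∈ b.support.filter (fun I => ival I ⊂ ival J), (b I) ^ 2 * len J := by
            refine Finset.sum_le_sum fun I hI => ?_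
            have hmem := (Finset.mem_filter.mp hI).2
            exact mul_le_mul_of_nonneg_left (len_le_of_subset hmem.subset) (sq_nonneg _)
        _ ≤ ∑ I ∈ b.support, (b I) ^ 2 * len J := by
            refine Finset.sum_le_sum_of_subset_of_nonneg (Finset.filter_subset _ _)
              fun I _ _ => mul_nonneg (sq_nonneg _) (len_nonneg J)
        _ = len J * ∑ I ∈ b.support, (b I) ^ 2 := by rw [← Finset.sum_mul, mul_comm]
    have hβ : (β J) ^ 2 ≤ ∑ J' ∈ β.support, (β J') ^ 2 := by
      by_cases hJ : J ∈ β.support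
      · exact Finset.single_le_sum (fun J' _ => sq_nonneg (β J')) hJ
      · rw [Finsupp.notMem_support_iff.mp hJ]
        simpa using Finset.sum_nonneg fun J' _ => sq_nonneg (β J')
    have hlen := len_pos J
    calc Rval J ≤ (β J) ^ 2 / len J * (len J * ∑ I ∈ b.support, (b I) ^ 2) := by
          exact mul_le_mul_of_nonneg_left hsum (div_nonneg (sq_nonneg _) (len_nonneg J))
      _ = (β J) ^ 2 * ∑ I ∈ b.support, (b I) ^ 2 := by
          field_simp
      _ ≤ C := by
          rw [hC]
          exact mul_le_mul_of_nonneg_right hβ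
            (Finset.sum_nonneg fun I _ => sq_nonneg (b I))
  have hbddR : BddAbove (Set.range fun J => Real.sqrt (Rval J)) := by
    refine ⟨Real.sqrt C, Set.forall_mem_range.2 fun J => Real.sqrt_le_sqrt (hRC J)⟩
  set S : ℝ := ⨆ J : D, Real.sqrt (Rval J) with hS
  have hS0 : 0 ≤ S := le_trans (Real.sqrt_nonneg (Rval (0, 0))) (le_ciSup hbddR (0, 0))
  have hRS : ∀ J, Rval J ≤ S ^ 2 := by
    intro J
    have h1 : Real.sqrt (Rval J) ≤ S := le_ciSup hbddR J
    have h2 : Real.sqrt (Rval J) ^ 2 ≤ S ^ 2 :=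
      pow_le_pow_left₀ (Real.sqrt_nonneg _) h1 2
    rwa [Real.sq_sqrt (hR0 J)] at h2
  have hEf : ∀ f : {f : ℝ → ℝ // UnitL2 f},
      ∫ σ, l2normSq (P false true b (Psig σ false false β f.1)) ∂μ ≤ S ^ 2 := by
    intro f
    rw [key_integral b β hμ f.1]
    calc ∑ J ∈ β.support, (ip f.1 (haar J)) ^ 2 * Rval J
        ≤ ∑ J ∈ β.support, (ip f.1 (haar J)) ^ 2 * S ^ 2 := by
          exact Finset.sum_le_sum fun J _ =>
            mul_le_mul_of_nonneg_left (hRS J) (sq_nonneg _)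
      _ = (∑ J ∈ β.support, (ip f.1 (haar J)) ^ 2) * S ^ 2 := by
          rw [Finset.sum_mul]
      _ ≤ 1 * S ^ 2 := by
          exact mul_le_mul_of_nonneg_right (bessel f.1 f.2 β.support) (sq_nonneg S)
      _ = S ^ 2 := one_mul _
  have havg : ∀ f : {f : ℝ → ℝ // UnitL2 f},
      Real.sqrt (∫ σ, l2normSq (P false true b (Psig σ false false β f.1)) ∂μ) ≤ S := by
    intro f
    have := Real.sqrt_le_sqrt (hEf f)
    rwa [Real.sqrt_sq hS0] at this
  have hbddavg : BddAbove (Set.range fun f : {f : ℝ → ℝ // UnitL2 f} =>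
      Real.sqrt (∫ σ, l2normSq (P false true b (Psig σ false false β f.1)) ∂μ)) :=
    ⟨S, Set.forall_mem_range.2 havg⟩
  have hhaar : ∀ J : D,
      ∫ σ, l2normSq (P false true b (Psig σ false false β (haar J))) ∂μ = Rval J := by
    intro J
    rw [key_integral b β hμ (haar J)]
    have step : ∀ J' ∈ β.support, (ip (haar J) (haar J')) ^ 2 * Rval J'
        = if J = J' then Rval J' else 0 := by
      intro J' _
      rw [ip_haar_haar]
      split_ifs <;> simp
    rw [Finset.sum_congr rfl step, Finset.sum_ite_eq β.support J Rval]
    split_ifs with hJ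
    · rfl
    · have hz : β J = 0 := Finsupp.notMem_support_iff.mp hJ
      simp [hRval, hz]
  apply le_antisymm
  · exact ciSup_le havg
  · refine ciSup_le fun J => ?_
    have : Real.sqrt (Rval J) = (fun f : {f : ℝ → ℝ // UnitL2 f} =>
        Real.sqrt (∫ σ, l2normSq (P false true b (Psig σ false false β f.1)) ∂μ))
          ⟨haar J, unitL2_haar J⟩ := by
      simp only [hhaar J]
    rw [this]
    exact le_ciSup hbddavg _

end RandomParaproducts
end
end
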